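/- The q-deformed Witt Hom-Lie algebra (V^q, [·,·], α), with basis {L_n : n ∈ ℤ}, bracket [L_m, L_n] = ({m} - {n}) L_{m+n} and twisting map α(L_n) = (1 + q^n) L_n, is multiplicative (i.e., α([x,y]) = [α(x),α(y)] for all x, y) if and only if q = -1. -/

import Mathlib

open Classical in
/-- The q-deformed Witt Hom-Lie algebra is multiplicative if and only if q = -1. -/
theorem qWitt_multiplicative_iff {K M : Type*} [Field K] [CharZero K]
    [AddCommGroup M] [Module K M]
    (q : K) (hq : q ≠ 0) (b : Module.Basis ℤ K M)
    (qn : ℤ → K) (hqn : ∀ n : ℤ, qn n = if q = 1 then (n : K) else (1 - q ^ n) / (1 - q))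
    (br : M →ₗ[K] M →ₗ[K] M)
    (hbr : ∀ m n : ℤ, br (b m) (b n) = (qn m - qn n) • b (m + n))
    (α : M →ₗ[K] M) (hα : ∀ n : ℤ, α (b n) = (1 + q ^ n) • b n) :
    (∀ x y : M, α (br x y) = br (α x) (α y)) ↔ q = -1 := by
  have q0 : qn 0 = 0 := by rw [hqn]; split <;> simp
  have q1 : qn 1 = 1 := by
    rw [hqn]; split
    · norm_num
    · rename_i h
      rw [zpow_one]
      exact div_self (sub_ne_zero.mpr fun e => ‹¬q = 1› e.symm)
  constructor
  · intro h
    have h1 := h (b 1) (b 0)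
    rw [hbr, hα, hα] at h1
    rw [q0, q1, sub_zero, one_smul, hα] at h1
    simp only [LinearMap.map_smul₂, LinearMap.smul_apply, LinearMap.map_smul, hbr, q0, q1] at h1
    simp only [zpow_one, zpow_zero, add_zero, sub_zero, one_smul, smul_smul] at h1
    have h2 := smul_left_injective K (b.ne_zero 1) h1
    linear_combination -h2
  · intro hq1 x y
    subst hq1
    have hne1 : (-1 : K) ≠ 1 := by norm_num
    have key : ∀ m n : ℤ, α (br (b m) (b n)) = br (α (b m)) (α (b n)) := by
      intro m n
      rw [hbr, map_smul, hα, hα, hα]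
      simp only [LinearMap.map_smul₂, LinearMap.smul_apply, LinearMap.map_smul, hbr,
        smul_smul]
      congr 1
      rw [hqn, hqn, if_neg hne1, if_neg hne1]
      rcases Int.even_or_odd m with hm | hm <;> rcases Int.even_or_odd n with hn | hn
      · rw [Even.neg_one_zpow hm, Even.neg_one_zpow hn, Even.neg_one_zpow (hm.add hn)]
        ring
      · rw [Even.neg_one_zpow hm, Odd.neg_one_zpow hn, Odd.neg_one_zpow (hm.add_odd hn)]
        ring
      · rw [Odd.neg_one_zpow hm, Even.neg_one_zpow hn, Odd.neg_one_zpow (hm.add_even hn)]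
        ring
      · rw [Odd.neg_one_zpow hm, Odd.neg_one_zpow hn, Even.neg_one_zpow (hm.add_odd hn)]
        ring
    have heq : LinearMap.compr₂ br α = LinearMap.compl₁₂ br α α := by
      apply b.ext; intro m; apply b.ext; intro n
      simpa using key m n
    simpa using LinearMap.congr_fun (LinearMap.congr_fun heq x) y
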